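/- arXiv:1908.03769 — 7 statements merged into one kernel-verified Lean document; each statement's English description precedes it below -/
import Mathlib

section
/- If G' is a splitting graph of a forest G, then G' is a forest (contains no cycle). -/
/-- `α : V' → V` is a splitting map from the graph `G'` to the graph `G`. -/
def IsSplittingMap {V' V : Type*} (G' : SimpleGraph V') (G : SimpleGraph V) (α : V' → V) : Prop :=
  Function.Surjective α ∧
  (∀ v w, G'.Adj v w → G.Adj (α v) (α w)) ∧
  Set.BijOn (Sym2.map α) G'.edgeSet G.edgeSet

/-- If `G'` is a splitting graph of a forest `G` (a graph with no cycles),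
then `G'` is a forest. -/
theorem splitting_graph_of_forest_is_forest
    {V' V : Type*} (G' : SimpleGraph V') (G : SimpleGraph V) (α : V' → V)
    (h : IsSplittingMap G' G α) (hG : G.IsAcyclic) :
    G'.IsAcyclic := by
  obtain ⟨-, hadj, hbij⟩ := h
  intro u c hc
  cases c with
  | nil => exact hc.ne_nil rfl
  | cons huv p =>
    -- the homomorphism induced by α
    let f : G' →g G := ⟨α, fun {a b} hab => hadj a b hab⟩
    have hnodup := hc.isTrail.edges_nodup
    rw [SimpleGraph.Walk.edges_cons, List.nodup_cons] at hnodup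
    obtain ⟨hne, -⟩ := hnodup
    -- every edge of G is a bridge
    have hbridge := (SimpleGraph.isAcyclic_iff_forall_adj_isBridge.mp hG) (hadj _ _ huv)
    rw [SimpleGraph.isBridge_iff_adj_and_forall_walk_mem_edges] at hbridge
    have hmem := hbridge ((p.map f).reverse)
    rw [SimpleGraph.Walk.edges_reverse, List.mem_reverse,
      SimpleGraph.Walk.edges_map, List.mem_map] at hmem
    obtain ⟨e, hep, heq⟩ := hmem
    have he' : e ∈ G'.edgeSet := p.edges_subset_edgeSet hep
    have huv' : s(u, _) ∈ G'.edgeSet := huv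
    have : e = s(u, _) := hbij.injOn he' huv' (by rw [Sym2.map_pair_eq]; exact heq)
    exact hne (this ▸ hep)
end

section
/- If G' is a splitting graph of G via the map α, then the induced matching number of G' is at least the induced matching number of G, i.e., ν(G) ≤ ν(G'). -/
/-- A finite set `M` of edges of `H` is an induced matching: the edges are pairwise
vertex-disjoint, and no edge of `H` intersects two distinct members of `M`. -/
def IsInducedMatching {V : Type*} (H : SimpleGraph V) (M : Finset (Sym2 V)) : Prop :=
  (↑M ⊆ H.edgeSet) ∧
  (∀ e ∈ M, ∀ f ∈ M, e ≠ f → ∀ v : V, ¬ (v ∈ e ∧ v ∈ f)) ∧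
  (∀ g ∈ H.edgeSet, ∀ e ∈ M, ∀ f ∈ M, e ≠ f →
    ¬ ((∃ u : V, u ∈ g ∧ u ∈ e) ∧ (∃ w : V, w ∈ g ∧ w ∈ f)))

/-- The induced matching number of `H`. -/
noncomputable def inducedMatchingNumber {V : Type*} (H : SimpleGraph V) : ℕ :=
  sSup {n : ℕ | ∃ M : Finset (Sym2 V), IsInducedMatching H M ∧ M.card = n}

/-- If `G'` is a splitting graph of `G`, then `ν(G) ≤ ν(G')`. -/
theorem inducedMatchingNumber_le_of_splitting
    {V' V : Type*} [Fintype V'] [Fintype V]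
    (G' : SimpleGraph V') (G : SimpleGraph V) (α : V' → V)
    (h : IsSplittingMap G' G α) :
    inducedMatchingNumber G ≤ inducedMatchingNumber G' := by
  classical
  obtain ⟨hsurj, hadj, hbij⟩ := h
  apply csSup_le_csSup
  · exact ⟨Fintype.card (Sym2 V'), fun n ⟨M, hM, hc⟩ => hc ▸ Finset.card_le_univ M⟩
  · exact ⟨0, ∅, ⟨by simp, by simp, by simp⟩, rfl⟩
  · rintro n ⟨M, ⟨hMe, hMd, hMi⟩, rfl⟩
    rcases M.eq_empty_or_nonempty with rfl | ⟨e₀, he₀⟩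
    · exact ⟨∅, ⟨by simp, by simp, by simp⟩, rfl⟩
    haveI : Nonempty (Sym2 V') := by
      obtain ⟨e', -, -⟩ := hbij.surjOn (hMe (Finset.mem_coe.mpr he₀))
      exact ⟨e'⟩
    set β := Function.invFunOn (Sym2.map α) G'.edgeSet with hβ
    have hkey : ∀ e ∈ M, β e ∈ G'.edgeSet ∧ Sym2.map α (β e) = e := by
      intro e he
      have heE : e ∈ G.edgeSet := hMe (Finset.mem_coe.mpr he)
      obtain ⟨e', he', hee⟩ := hbij.surjOn heE
      exact ⟨Function.invFunOn_mem ⟨e', he', hee⟩, Function.invFunOn_eq ⟨e', he', hee⟩⟩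
    refine ⟨M.image β, ⟨?_, ?_, ?_⟩, ?_⟩
    · intro e' he'
      simp only [Finset.coe_image, Set.mem_image, Finset.mem_coe] at he'
      obtain ⟨e, he, rfl⟩ := he'
      exact (hkey e he).1
    · intro e' he' f' hf' hne v ⟨hve, hvf⟩
      simp only [Finset.mem_image] at he' hf'
      obtain ⟨e, he, rfl⟩ := he'
      obtain ⟨f, hf, rfl⟩ := hf'
      have hef : e ≠ f := fun hq => hne (by rw [hq])
      refine hMd e he f hf hef (α v) ⟨?_, ?_⟩
      · rw [← (hkey e he).2]; exact Sym2.mem_map.mpr ⟨v, hve, rfl⟩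
      · rw [← (hkey f hf).2]; exact Sym2.mem_map.mpr ⟨v, hvf, rfl⟩
    · intro g hg e' he' f' hf' hne ⟨⟨u, hug, hue⟩, ⟨w, hwg, hwf⟩⟩
      simp only [Finset.mem_image] at he' hf'
      obtain ⟨e, he, rfl⟩ := he'
      obtain ⟨f, hf, rfl⟩ := hf'
      have hef : e ≠ f := fun hq => hne (by rw [hq])
      refine hMi (Sym2.map α g) (hbij.mapsTo hg) e he f hf hef ⟨⟨α u, ?_, ?_⟩, ⟨α w, ?_, ?_⟩⟩
      · exact Sym2.mem_map.mpr ⟨u, hug, rfl⟩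
      · rw [← (hkey e he).2]; exact Sym2.mem_map.mpr ⟨u, hue, rfl⟩
      · exact Sym2.mem_map.mpr ⟨w, hwg, rfl⟩
      · rw [← (hkey f hf).2]; exact Sym2.mem_map.mpr ⟨w, hwf, rfl⟩
    · refine Finset.card_image_of_injOn ?_
      intro e he f hf hq
      rw [← (hkey e he).2, ← (hkey f hf).2, hq]
end

section
/- If G' is a splitting graph of G via α, then the maximum cardinality of a minimal vertex cover of G is at most the maximum cardinality of a minimal vertex cover of G' (i.e., bight(I(G)) ≤ bight(I(G'))). -/
/-- A vertex cover of `H` is a (finite) set of vertices meeting every edge of `H`. -/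
def IsVertexCover {V : Type*} (H : SimpleGraph V) (C : Set V) : Prop :=
  ∀ e ∈ H.edgeSet, ∃ v ∈ C, v ∈ e

/-- A minimal vertex cover: a vertex cover no proper subset of which is a vertex cover. -/
def IsMinimalVertexCover {V : Type*} (H : SimpleGraph V) (C : Finset V) : Prop :=
  IsVertexCover H ↑C ∧ ∀ D : Finset V, D ⊂ C → ¬ IsVertexCover H ↑D

/-- `bight I(H)`: the maximum cardinality of a minimal vertex cover of `H`. -/
noncomputable def bight {V : Type*} (H : SimpleGraph V) : ℕ :=
  sSup {n : ℕ | ∃ C : Finset V, IsMinimalVertexCover H C ∧ C.card = n}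

lemma exists_min_cover {V : Type*} (H : SimpleGraph V) :
    ∀ C : Finset V, IsVertexCover H ↑C → ∃ D, D ⊆ C ∧ IsMinimalVertexCover H D := by
  intro C
  induction C using Finset.strongInduction with
  | _ C ih =>
    intro hC
    by_cases h : ∃ D ⊂ C, IsVertexCover H ↑D
    · obtain ⟨D, hD, hcov⟩ := h
      obtain ⟨E, hE, hmin⟩ := ih D hD hcov
      exact ⟨E, hE.trans hD.subset, hmin⟩
    · push_neg at h
      exact ⟨C, le_refl _, hC, h⟩

/-- If `G'` is a splitting graph of `G`, then the maximum cardinality of a minimal vertex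
cover of `G` is at most that of `G'`, i.e., `bight I(G) ≤ bight I(G')`. -/
theorem bight_le_of_splitting
    {V' V : Type*} [Fintype V'] [Fintype V]
    (G' : SimpleGraph V') (G : SimpleGraph V) (α : V' → V)
    (h : IsSplittingMap G' G α) :
    bight G ≤ bight G' := by
  classical
  obtain ⟨hsurj, hadj, hbij⟩ := h
  apply csSup_le'
  rintro n ⟨C, ⟨hCcov, hCmin⟩, rfl⟩
  set C0 : Finset V' := Finset.univ.filter (fun v => α v ∈ C) with hC0
  have hC0cov : IsVertexCover G' ↑C0 := by
    intro e he
    obtain ⟨v, hv, hve⟩ := hCcov (Sym2.map α e) (hbij.1 he)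
    obtain ⟨w, hw, rfl⟩ := Sym2.mem_map.mp hve
    exact ⟨w, Finset.mem_coe.mpr (by simp [hC0, Finset.mem_coe.mp hv]), hw⟩
  obtain ⟨D, hDsub, hDcov, hDmin⟩ := exists_min_cover G' C0 hC0cov
  have hcard : C.card ≤ D.card := by
    have hCsub : C ⊆ D.image α := by
      intro c hc
      have hnc := hCmin (C.erase c) (Finset.erase_ssubset hc)
      rw [IsVertexCover] at hnc
      push_neg at hnc
      obtain ⟨e, he, hone⟩ := hnc
      obtain ⟨e', he', rfl⟩ := hbij.2.2 he
      obtain ⟨v, hvD, hve⟩ := hDcov e' he'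
      have hαv : α v ∈ C := by
        have := hDsub hvD
        simpa [hC0] using this
      have hαv_mem : α v ∈ Sym2.map α e' := Sym2.mem_map.mpr ⟨v, hve, rfl⟩
      have hvc : α v = c := by
        by_contra hne
        exact hone (α v) (Finset.mem_coe.mpr (Finset.mem_erase.mpr ⟨hne, hαv⟩)) hαv_mem
      rw [← hvc]
      exact Finset.mem_image_of_mem α hvD
    calc C.card ≤ (D.image α).card := Finset.card_le_card hCsub
      _ ≤ D.card := Finset.card_image_le
  have hle : D.card ≤ bight G' :=
    le_csSup ⟨Fintype.card V', fun m hm => by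
      obtain ⟨E, _, rfl⟩ := hm; exact Finset.card_le_univ E⟩ ⟨D, ⟨hDcov, hDmin⟩, rfl⟩
  exact hcard.trans hle
end

section
/- Let G be a graph on n vertices and G' a splitting graph of G on n' vertices. If μ and μ' denote the minimum sizes of vertex covers of G and G' respectively, then n' − μ' ≥ n − μ. (Equivalently, dim S'/I(G') ≥ dim S/I(G), where the dimension of the quotient by an edge ideal equals the number of vertices minus the minimum vertex cover size.) -/
/-- `μ(H)`: the minimum cardinality of a vertex cover of `H`. -/
noncomputable def minVertexCoverSize {V : Type*} (H : SimpleGraph V) : ℕ :=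
  sInf {n : ℕ | ∃ C : Finset V, IsVertexCover H ↑C ∧ C.card = n}

/-- If `G'` is a splitting graph of `G`, with `n, n'` the numbers of vertices and `μ, μ'`
the minimum vertex cover sizes of `G, G'`, then `n' − μ' ≥ n − μ`; equivalently
`dim S'/I(G') ≥ dim S/I(G)`. -/
theorem dim_le_of_splitting
    {V' V : Type*} [Fintype V'] [Fintype V]
    (G' : SimpleGraph V') (G : SimpleGraph V) (α : V' → V)
    (h : IsSplittingMap G' G α) :
    Fintype.card V - minVertexCoverSize G ≤ Fintype.card V' - minVertexCoverSize G' := by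
  classical
  obtain ⟨hsurj, hadj, hbij⟩ := h
  -- the set of cover sizes of G is nonempty
  have hne : {n : ℕ | ∃ C : Finset V, IsVertexCover G ↑C ∧ C.card = n}.Nonempty := by
    refine ⟨Finset.univ.card, Finset.univ, ?_, rfl⟩
    intro e he
    exact ⟨e.out.1, by simp, Sym2.out_fst_mem e⟩
  obtain ⟨C, hC, hCcard⟩ := Nat.sInf_mem hne
  set I : Finset V := Cᶜ with hI
  have hIcard : I.card = Fintype.card V - C.card := Finset.card_compl C
  -- I is independent in G
  have hInd : ∀ a ∈ I, ∀ b ∈ I, ¬ G.Adj a b := by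
    intro a ha b hb hab
    obtain ⟨x, hx, hxe⟩ := hC s(a, b) (G.mem_edgeSet.mpr hab)
    rcases Sym2.mem_iff.mp hxe with rfl | rfl
    · exact (Finset.mem_compl.mp ha) hx
    · exact (Finset.mem_compl.mp hb) hx
  -- a section of α
  set s : V → V' := Function.surjInv hsurj with hsdef
  have hs : ∀ v, α (s v) = v := fun v => Function.surjInv_eq hsurj v
  have hsinj : Function.Injective s := Function.injective_surjInv hsurj
  set D : Finset V' := (I.image s)ᶜ with hD
  have hDcard : D.card = Fintype.card V' - I.card := by
    rw [hD, Finset.card_compl, Finset.card_image_of_injective _ hsinj]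
  -- D is a vertex cover of G'
  have hDcover : IsVertexCover G' ↑D := by
    intro e he
    induction e using Sym2.ind with
    | _ v w =>
      by_cases hv : v ∈ D
      · exact ⟨v, hv, Sym2.mem_mk_left v w⟩
      by_cases hw : w ∈ D
      · exact ⟨w, hw, Sym2.mem_mk_right v w⟩
      exfalso
      have hv' : v ∈ I.image s := not_not.mp fun hn => hv (Finset.mem_compl.mpr hn)
      have hw' : w ∈ I.image s := not_not.mp fun hn => hw (Finset.mem_compl.mpr hn)
      obtain ⟨a, ha, rfl⟩ := Finset.mem_image.mp hv'
      obtain ⟨b, hb, rfl⟩ := Finset.mem_image.mp hw'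
      have hadj' : G.Adj a b := by
        have := hadj _ _ (G'.mem_edgeSet.mp he)
        rwa [hs, hs] at this
      exact hInd a ha b hb hadj'
  have hμ' : minVertexCoverSize G' ≤ D.card :=
    Nat.sInf_le ⟨D, hDcover, rfl⟩
  have hμ : C.card = minVertexCoverSize G := hCcard
  have hIle : I.card ≤ Fintype.card V' := by
    calc I.card = (I.image s).card := (Finset.card_image_of_injective _ hsinj).symm
    _ ≤ Fintype.card V' := Finset.card_le_univ _
  omega
end

section
/- Let I be the edge ideal of a finite simple graph G in the polynomial ring S over a field K, and let x, y be vertices of G with N_G[x] ∩ N_G[y] = ∅. Then the colon ideal (I : (x − y)) equals I + (zw : z ∈ N_G(x), w ∈ N_G(y)). -/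
open MvPolynomial

/-- The edge ideal of a graph `G`, generated by the monomials `X i * X j` for edges
`{i,j}` of `G`. -/
noncomputable def edgeIdeal (K : Type*) [Field K] {V : Type*} (G : SimpleGraph V) :
    Ideal (MvPolynomial V K) :=
  Ideal.span {m | ∃ i j, G.Adj i j ∧ m = X i * X j}

lemma climb_aux {K : Type*} [Field K] {V : Type*} [DecidableEq V] (x y : V) (hxy : x ≠ y)
    (T : Set (V →₀ ℕ)) (P : V → Prop)
    (hT : ∀ s ∈ T, s x = 0 ∨ ∃ z, P z ∧ z ≠ x ∧ z ≠ y ∧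
      s = Finsupp.single x 1 + Finsupp.single z 1)
    (f : MvPolynomial V K)
    (hf : ∀ μ ∈ (f * (X x - X y)).support, ∃ s ∈ T, s ≤ μ) :
    ∀ m ∈ f.support, (∃ s ∈ T, s ≤ m) ∨ ∃ z, P z ∧ z ≠ x ∧ z ≠ y ∧ Finsupp.single z 1 ≤ m := by
  set N := f.support.sup (fun m => m x) with hN
  suffices H : ∀ k, ∀ m ∈ f.support, N - m x ≤ k →
      (∃ s ∈ T, s ≤ m) ∨ ∃ z, P z ∧ z ≠ x ∧ z ≠ y ∧ Finsupp.single z 1 ≤ m by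
    intro m hm
    exact H (N - m x) m hm le_rfl
  intro k
  induction k with
  | zero =>
    intro m hm hk
    have hmx : m x ≤ N := Finset.le_sup (f := fun m => m x) hm
    -- consider the coefficient of m + single x 1 in f * (X x - X y)
    by_cases hc : coeff (m + Finsupp.single x 1) (f * (X x - X y)) = 0
    · exfalso
      rw [mul_sub, coeff_sub, coeff_mul_X, coeff_mul_X'] at hc
      by_cases hy : y ∈ (m + Finsupp.single x 1).support
      · rw [if_pos hy] at hc
        have heq : coeff (m + Finsupp.single x 1 - Finsupp.single y 1) f = coeff m f :=
          (sub_eq_zero.1 hc).symm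
        have hm' : (m + Finsupp.single x 1 - Finsupp.single y 1 : V →₀ ℕ) ∈ f.support := by
          rw [mem_support_iff, heq]
          exact mem_support_iff.1 hm
        have hx1 : (m + Finsupp.single x 1 - Finsupp.single y 1 : V →₀ ℕ) x = m x + 1 := by
          rw [Finsupp.tsub_apply, Finsupp.add_apply, Finsupp.single_apply,
            Finsupp.single_apply, if_pos rfl, if_neg (Ne.symm hxy)]
          omega
        have hle : (m + Finsupp.single x 1 - Finsupp.single y 1 : V →₀ ℕ) x ≤ N :=
          Finset.le_sup (f := fun m => m x) hm'
        omega
      · rw [if_neg hy, sub_zero] at hc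
        exact mem_support_iff.1 hm hc
    · obtain ⟨s, hsT, hs⟩ := hf _ (mem_support_iff.2 hc)
      rcases hT s hsT with h0 | ⟨z, hPz, hzx, hzy, rfl⟩
      · left
        refine ⟨s, hsT, fun v => ?_⟩
        rcases eq_or_ne v x with rfl | hv
        · simp [h0]
        · have := hs v
          simpa [Finsupp.single_apply, hv, Ne.symm hv] using this
      · right
        refine ⟨z, hPz, hzx, hzy, ?_⟩
        have := hs z
        simp only [Finsupp.add_apply, Finsupp.single_apply, if_neg (Ne.symm hzx)] at this ⊢
        intro v
        rcases eq_or_ne v z with rfl | hv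
        · simpa [Finsupp.single_apply] using this
        · simp [Finsupp.single_apply, Ne.symm hv]
  | succ k ih =>
    intro m hm hk
    have hmx : m x ≤ N := Finset.le_sup (f := fun m => m x) hm
    by_cases hc : coeff (m + Finsupp.single x 1) (f * (X x - X y)) = 0
    · rw [mul_sub, coeff_sub, coeff_mul_X, coeff_mul_X'] at hc
      by_cases hy : y ∈ (m + Finsupp.single x 1).support
      · rw [if_pos hy] at hc
        set m' := m + Finsupp.single x 1 - Finsupp.single y 1 with hm'def
        have heq : coeff m' f = coeff m f := (sub_eq_zero.1 hc).symm
        have hm' : m' ∈ f.support := by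
          rw [mem_support_iff, heq]
          exact mem_support_iff.1 hm
        have hm'x : m' x = m x + 1 := by
          rw [hm'def, Finsupp.tsub_apply, Finsupp.add_apply, Finsupp.single_apply,
            Finsupp.single_apply, if_pos rfl, if_neg (Ne.symm hxy)]
          omega
        have hle : m' x ≤ N := Finset.le_sup (f := fun m => m x) hm'
        have hmy : 1 ≤ m y := by
          have := Finsupp.mem_support_iff.1 hy
          simp only [Finsupp.add_apply, Finsupp.single_apply, if_neg hxy] at this
          omega
        -- pointwise comparison facts
        have hvals : ∀ v, v ≠ x → m' v ≤ m v := by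
          intro v hv
          rcases eq_or_ne v y with rfl | hvy
          · rw [hm'def, Finsupp.tsub_apply, Finsupp.add_apply, Finsupp.single_apply,
              Finsupp.single_apply, if_neg hxy, if_pos rfl]
            omega
          · rw [hm'def, Finsupp.tsub_apply, Finsupp.add_apply, Finsupp.single_apply,
              Finsupp.single_apply, if_neg (fun h => hv h.symm), if_neg (fun h => hvy h.symm)]
            omega
        rcases ih m' hm' (by omega) with ⟨s, hsT, hs⟩ | ⟨z, hPz, hzx, hzy, hz⟩
        · rcases hT s hsT with h0 | ⟨z, hPz, hzx, hzy, rfl⟩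
          · left
            refine ⟨s, hsT, fun v => ?_⟩
            rcases eq_or_ne v x with rfl | hv
            · simp [h0]
            · exact le_trans (hs v) (hvals v hv)
          · right
            refine ⟨z, hPz, hzx, hzy, ?_⟩
            have h1 : (1 : ℕ) ≤ m' z := by
              have := hs z
              simpa [Finsupp.add_apply, Finsupp.single_apply, Ne.symm hzx] using this
            intro v
            rcases eq_or_ne v z with rfl | hv
            · simpa [Finsupp.single_apply] using le_trans h1 (hvals v hzx)
            · simp [Finsupp.single_apply, Ne.symm hv]
        · right
          refine ⟨z, hPz, hzx, hzy, ?_⟩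
          intro v
          rcases eq_or_ne v z with rfl | hv
          · have h1 : (1 : ℕ) ≤ m' v := by simpa [Finsupp.single_apply] using hz v
            simpa [Finsupp.single_apply] using le_trans h1 (hvals v hzx)
          · simp [Finsupp.single_apply, Ne.symm hv]
      · rw [if_neg hy, sub_zero] at hc
        exact absurd hc (mem_support_iff.1 hm)
    · obtain ⟨s, hsT, hs⟩ := hf _ (mem_support_iff.2 hc)
      rcases hT s hsT with h0 | ⟨z, hPz, hzx, hzy, rfl⟩
      · left
        refine ⟨s, hsT, fun v => ?_⟩
        rcases eq_or_ne v x with rfl | hv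
        · simp [h0]
        · have := hs v
          simpa [Finsupp.single_apply, hv, Ne.symm hv] using this
      · right
        refine ⟨z, hPz, hzx, hzy, ?_⟩
        have := hs z
        simp only [Finsupp.add_apply, Finsupp.single_apply, if_neg (Ne.symm hzx)] at this
        intro v
        rcases eq_or_ne v z with rfl | hv
        · simpa [Finsupp.single_apply] using this
        · simp [Finsupp.single_apply, Ne.symm hv]

/-- Let `I = I(G)` be the edge ideal of `G` and let `x, y` be vertices of `G` with
disjoint closed neighborhoods, `N_G[x] ∩ N_G[y] = ∅`. Then
`(I : (x − y)) = I + (zw : z ∈ N_G(x), w ∈ N_G(y))`. -/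
theorem colon_edgeIdeal_of_disjoint_closed_neighborhoods
    (K : Type*) [Field K] {V : Type*} (G : SimpleGraph V) (x y : V)
    (hdisj : Disjoint (insert x (G.neighborSet x)) (insert y (G.neighborSet y))) :
    (edgeIdeal K G).colon (Ideal.span {(X x - X y : MvPolynomial V K)}) =
      edgeIdeal K G ⊔
        Ideal.span {m | ∃ z w, G.Adj x z ∧ G.Adj y w ∧ m = X z * X w} := by
  classical
  have hdl := Set.disjoint_left.1 hdisj
  have hxy : x ≠ y := fun h => hdl (Set.mem_insert x _) (h ▸ Set.mem_insert x _)
  have hnadj : ¬ G.Adj x y := fun h =>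
    hdl (Set.mem_insert_of_mem _ h) (Set.mem_insert y _)
  have hnxy : ∀ z, G.Adj x z → G.Adj y z → False := fun z h1 h2 =>
    hdl (Set.mem_insert_of_mem _ h1) (Set.mem_insert_of_mem _ h2)
  -- monomial ideal presentations
  set Eset : Set (V →₀ ℕ) :=
    {s | ∃ i j, G.Adj i j ∧ s = Finsupp.single i 1 + Finsupp.single j 1} with hEset
  set Zset : Set (V →₀ ℕ) :=
    {s | ∃ z w, G.Adj x z ∧ G.Adj y w ∧ s = Finsupp.single z 1 + Finsupp.single w 1} with hZset
  have hXX : ∀ i j : V, (X i * X j : MvPolynomial V K) =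
      monomial (Finsupp.single i 1 + Finsupp.single j 1) 1 := by
    intro i j
    rw [show (X i * X j : MvPolynomial V K) =
      monomial (Finsupp.single i 1) 1 * monomial (Finsupp.single j 1) 1 from rfl,
      monomial_mul, one_mul]
  have hI : edgeIdeal K G = Ideal.span ((fun s => monomial s (1 : K)) '' Eset) := by
    unfold edgeIdeal
    congr 1
    ext p
    constructor
    · rintro ⟨i, j, hij, rfl⟩
      exact ⟨_, ⟨i, j, hij, rfl⟩, (hXX i j).symm⟩
    · rintro ⟨s, ⟨i, j, hij, rfl⟩, rfl⟩
      exact ⟨i, j, hij, (hXX i j).symm⟩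
  have hZ : Ideal.span {m : MvPolynomial V K | ∃ z w, G.Adj x z ∧ G.Adj y w ∧ m = X z * X w} =
      Ideal.span ((fun s => monomial s (1 : K)) '' Zset) := by
    congr 1
    ext p
    constructor
    · rintro ⟨z, w, h1, h2, rfl⟩
      exact ⟨_, ⟨z, w, h1, h2, rfl⟩, (hXX z w).symm⟩
    · rintro ⟨s, ⟨z, w, h1, h2, rfl⟩, rfl⟩
      exact ⟨z, w, h1, h2, (hXX z w).symm⟩
  have hJ : edgeIdeal K G ⊔
        Ideal.span {m : MvPolynomial V K | ∃ z w, G.Adj x z ∧ G.Adj y w ∧ m = X z * X w} =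
      Ideal.span ((fun s => monomial s (1 : K)) '' (Eset ∪ Zset)) := by
    rw [hI, hZ, Set.image_union, Ideal.span_union]
  apply le_antisymm
  · -- hard direction
    intro f hf
    have hmul : f * (X x - X y) ∈ edgeIdeal K G := Ideal.mem_colon_span_singleton.1 hf
    rw [hI, mem_ideal_span_monomial_image] at hmul
    rw [hJ, mem_ideal_span_monomial_image]
    intro m hm
    -- x-climb
    have hTx : ∀ s ∈ Eset, s x = 0 ∨ ∃ z, G.Adj x z ∧ z ≠ x ∧ z ≠ y ∧
        s = Finsupp.single x 1 + Finsupp.single z 1 := by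
      rintro s ⟨i, j, hij, rfl⟩
      rcases eq_or_ne i x with rfl | hix
      · exact Or.inr ⟨j, hij, (G.ne_of_adj hij).symm, fun h => hnadj (h ▸ hij), rfl⟩
      rcases eq_or_ne j x with rfl | hjx
      · exact Or.inr ⟨i, hij.symm, (G.ne_of_adj hij), fun h => hnadj (h ▸ hij.symm), add_comm _ _⟩
      · left
        simp only [Finsupp.add_apply, Finsupp.single_apply,
          if_neg hix, if_neg hjx, add_zero]
    have hTy : ∀ s ∈ Eset, s y = 0 ∨ ∃ z, G.Adj y z ∧ z ≠ y ∧ z ≠ x ∧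
        s = Finsupp.single y 1 + Finsupp.single z 1 := by
      rintro s ⟨i, j, hij, rfl⟩
      rcases eq_or_ne i y with rfl | hiy
      · exact Or.inr ⟨j, hij, (G.ne_of_adj hij).symm,
          fun h => hnadj (h ▸ hij.symm), rfl⟩
      rcases eq_or_ne j y with rfl | hjy
      · exact Or.inr ⟨i, hij.symm, (G.ne_of_adj hij),
          fun h => hnadj (h ▸ hij), add_comm _ _⟩
      · left
        simp only [Finsupp.add_apply, Finsupp.single_apply,
          if_neg hiy, if_neg hjy, add_zero]
    have hmuly : ∀ μ ∈ (f * (X y - X x)).support, ∃ s ∈ Eset, s ≤ μ := by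
      intro μ hμ
      apply hmul
      have : f * (X y - X x) = -(f * (X x - X y)) := by ring
      rwa [this, support_neg] at hμ
    rcases climb_aux x y hxy Eset (G.Adj x) hTx f hmul m hm with ⟨s, hsE, hs⟩ | ⟨z, hz, hzx, hzy, hzm⟩
    · exact ⟨s, Or.inl hsE, hs⟩
    rcases climb_aux y x (Ne.symm hxy) Eset (G.Adj y) hTy f hmuly m hm with
      ⟨s, hsE, hs⟩ | ⟨w, hw, hwy, hwx, hwm⟩
    · exact ⟨s, Or.inl hsE, hs⟩
    have hzw : z ≠ w := fun h => hnxy z hz (h ▸ hw)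
    refine ⟨Finsupp.single z 1 + Finsupp.single w 1, Or.inr ⟨z, w, hz, hw, rfl⟩, fun v => ?_⟩
    rcases eq_or_ne v z with rfl | hvz
    · simpa [Finsupp.single_apply, Ne.symm hzw] using hzm v
    rcases eq_or_ne v w with rfl | hvw
    · simpa [Finsupp.single_apply, Ne.symm hvz] using hwm v
    · simp [Finsupp.single_apply, Ne.symm hvz, Ne.symm hvw]
  · -- easy direction
    rw [sup_le_iff]
    constructor
    · intro f hf
      exact Ideal.mem_colon_span_singleton.2 (Ideal.mul_mem_right _ _ hf)
    · rw [Ideal.span_le]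
      rintro p ⟨z, w, h1, h2, rfl⟩
      refine SetLike.mem_coe.2 (Ideal.mem_colon_span_singleton.2 ?_)
      have hxz : (X x * X z : MvPolynomial V K) ∈ edgeIdeal K G :=
        Ideal.subset_span ⟨x, z, h1, rfl⟩
      have hyw : (X y * X w : MvPolynomial V K) ∈ edgeIdeal K G :=
        Ideal.subset_span ⟨y, w, h2, rfl⟩
      have : (X z * X w : MvPolynomial V K) * (X x - X y) =
          X w * (X x * X z) - X z * (X y * X w) := by ring
      rw [this]
      exact sub_mem (Ideal.mul_mem_left _ _ hxz) (Ideal.mul_mem_left _ _ hyw)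
end

section
/- Let G' be a splitting graph of G via α satisfying condition (1): for any two vertices v, v' of G' with α(v) = α(v'), every vertex in N_{G'}(v) is adjacent to every vertex in N_{G'}(v'). If x, y ∈ V(G') satisfy α(x) = α(y), then in the polynomial ring S' over a field, the edge ideal I = I(G') satisfies (I : (x − y)) = I. -/
open MvPolynomial

section Aux

variable {K V' : Type*} [Field K] (G' : SimpleGraph V')

/-- A monomial is "divisible by an edge". -/
def EdgeDvd (d : V' →₀ ℕ) : Prop :=
  ∃ i j, G'.Adj i j ∧ Finsupp.single i 1 + Finsupp.single j 1 ≤ d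

lemma edgeDvd_of_pair {d : V' →₀ ℕ} {z w : V'} (hzw : G'.Adj z w)
    (hz : d z ≠ 0) (hw : d w ≠ 0) : EdgeDvd G' d := by
  refine ⟨z, w, hzw, ?_⟩
  have hne : z ≠ w := hzw.ne
  intro v
  classical
  rw [Finsupp.add_apply, Finsupp.single_apply, Finsupp.single_apply]
  by_cases hvz : z = v
  · subst hvz
    rw [if_pos rfl, if_neg (fun h => hne h.symm)]
    omega
  · rw [if_neg hvz]
    by_cases hvw : w = v
    · subst hvw; rw [if_pos rfl]; omega
    · rw [if_neg hvw]; omega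

lemma edgeIdeal_eq_span :
    edgeIdeal K G' = Ideal.span
      ((fun s => monomial s (1 : K)) ''
        {s | ∃ i j, G'.Adj i j ∧ s = Finsupp.single i 1 + Finsupp.single j 1}) := by
  unfold edgeIdeal
  congr 1
  ext m
  constructor
  · rintro ⟨i, j, hij, rfl⟩
    exact ⟨Finsupp.single i 1 + Finsupp.single j 1, ⟨i, j, hij, rfl⟩, by
      show monomial _ _ = _
      rw [X, X, monomial_mul, one_mul]⟩
  · rintro ⟨s, ⟨i, j, hij, rfl⟩, rfl⟩
    exact ⟨i, j, hij, by
      show monomial _ _ = _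
      rw [X, X, monomial_mul, one_mul]⟩

lemma mem_edgeIdeal_iff {f : MvPolynomial V' K} :
    f ∈ edgeIdeal K G' ↔ ∀ d ∈ f.support, EdgeDvd G' d := by
  rw [edgeIdeal_eq_span, mem_ideal_span_monomial_image]
  constructor
  · intro H d hd
    obtain ⟨s, ⟨i, j, hij, rfl⟩, hle⟩ := H d hd
    exact ⟨i, j, hij, hle⟩
  · intro H d hd
    obtain ⟨i, j, hij, hle⟩ := H d hd
    exact ⟨Finsupp.single i 1 + Finsupp.single j 1, ⟨i, j, hij, rfl⟩, hle⟩

/-- The key combinatorial lemma. -/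
lemma key_lemma (x y : V') (hxy : x ≠ y) (hnadj : ¬ G'.Adj x y)
    (hcomm : ∀ z w, G'.Adj x z → G'.Adj y w → G'.Adj z w)
    (g : MvPolynomial V' K)
    (hg : ∀ d ∈ g.support, ¬ EdgeDvd G' d)
    (hmul : ∀ d ∈ (g * (X x - X y)).support, EdgeDvd G' d)
    (hA : ∃ d ∈ g.support, ¬ ∃ z, G'.Adj x z ∧ d z ≠ 0) : False := by
  classical
  set T : Finset (V' →₀ ℕ) :=
    g.support.filter (fun d => ¬ ∃ z, G'.Adj x z ∧ d z ≠ 0) with hT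
  have hTne : T.Nonempty := by
    obtain ⟨d, hd, hdA⟩ := hA
    exact ⟨d, Finset.mem_filter.2 ⟨hd, hdA⟩⟩
  obtain ⟨d, hdT, hmax⟩ := T.exists_max_image (fun d => d x) hTne
  obtain ⟨hd, hdA⟩ := Finset.mem_filter.1 hdT
  -- d + e_x is not divisible by any edge
  have hnotD : ¬ EdgeDvd G' (d + Finsupp.single x 1) := by
    rintro ⟨i, j, hij, hle⟩
    have happ : ∀ v, (Finsupp.single i 1 + Finsupp.single j 1 : V' →₀ ℕ) v
        ≤ (d + Finsupp.single x 1 : V' →₀ ℕ) v := Finsupp.le_def.1 hle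
    have hkey : ∀ v, v ≠ x → (Finsupp.single i 1 + Finsupp.single j 1 : V' →₀ ℕ) v ≤ d v := by
      intro v hvx
      have h2 := happ v
      rwa [Finsupp.add_apply d, Finsupp.single_apply, if_neg (fun hh : x = v => hvx hh.symm),
        add_zero] at h2
    by_cases hix : i = x
    · subst hix
      have h1 := hkey j hij.ne'
      rw [Finsupp.add_apply, Finsupp.single_apply, Finsupp.single_apply,
        if_neg hij.ne, if_pos rfl] at h1
      exact hdA ⟨j, hij, by omega⟩
    · by_cases hjx : j = x
      · subst hjx
        have h1 := hkey i hix
        rw [Finsupp.add_apply, Finsupp.single_apply, Finsupp.single_apply,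
          if_pos rfl, if_neg hij.ne'] at h1
        exact hdA ⟨i, hij.symm, by omega⟩
      · refine hg d hd ⟨i, j, hij, Finsupp.le_def.2 fun v => ?_⟩
        by_cases hvx : v = x
        · subst hvx
          rw [Finsupp.add_apply, Finsupp.single_apply, Finsupp.single_apply,
            if_neg hix, if_neg hjx]
          omega
        · exact hkey v hvx
  have hco : coeff (d + Finsupp.single x 1) (g * (X x - X y)) = 0 := by
    by_contra hc
    exact hnotD (hmul _ (mem_support_iff.2 hc))
  rw [mul_sub, coeff_sub, coeff_mul_X, coeff_mul_X'] at hco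
  have hdy : d y ≠ 0 := by
    intro h0
    rw [if_neg, sub_zero] at hco
    · exact mem_support_iff.1 hd hco
    · rw [Finsupp.mem_support_iff, Finsupp.add_apply, Finsupp.single_apply,
        if_neg hxy, h0]
      simp
  rw [if_pos] at hco
  swap
  · rw [Finsupp.mem_support_iff, Finsupp.add_apply, Finsupp.single_apply, if_neg hxy]
    simpa using hdy
  set d' : V' →₀ ℕ := d + Finsupp.single x 1 - Finsupp.single y 1 with hd'
  have hcd' : coeff d' g = coeff d g := by
    have := sub_eq_zero.1 hco
    exact this.symm
  have hd'supp : d' ∈ g.support :=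
    mem_support_iff.2 (by rw [hcd']; exact mem_support_iff.1 hd)
  have hd'x : d' x = d x + 1 := by
    rw [hd', Finsupp.tsub_apply, Finsupp.add_apply, Finsupp.single_apply,
      Finsupp.single_apply, if_pos rfl, if_neg (fun h : y = x => hxy h.symm)]
    omega
  have hd'T : d' ∉ T := by
    intro hmem
    have := hmax d' hmem
    omega
  have : ∃ z, G'.Adj x z ∧ d' z ≠ 0 := by
    by_contra hcon
    exact hd'T (Finset.mem_filter.2 ⟨hd'supp, hcon⟩)
  obtain ⟨z, hz, hz0⟩ := this
  have hzx : z ≠ x := hz.ne'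
  have hzy : z ≠ y := fun h => hnadj (h ▸ hz)
  have hd'z : d' z = d z := by
    rw [hd', Finsupp.tsub_apply, Finsupp.add_apply, Finsupp.single_apply,
      Finsupp.single_apply, if_neg (fun h : x = z => hzx h.symm),
      if_neg (fun h : y = z => hzy h.symm)]
    omega
  exact hdA ⟨z, hz, by rw [← hd'z]; exact hz0⟩

end Aux

/-- Let `G'` be a splitting graph of `G` via `α` satisfying condition (1): whenever
`α v = α v'` for distinct `v, v'`, every neighbor of `v` in `G'` is adjacent to every
neighbor of `v'` in `G'`. If `x, y ∈ V(G')` are distinct with `α x = α y`, then the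
edge ideal `I = I(G')` satisfies `(I : (x − y)) = I`. -/
theorem colon_eq_self_of_special_splitting
    (K : Type*) [Field K] {V' V : Type*}
    (G' : SimpleGraph V') (G : SimpleGraph V) (α : V' → V)
    (h : IsSplittingMap G' G α)
    (hcond1 : ∀ v v', v ≠ v' → α v = α v' →
      ∀ z w, G'.Adj v z → G'.Adj v' w → G'.Adj z w)
    (x y : V') (hxy : x ≠ y) (hα : α x = α y) :
    (edgeIdeal K G').colon (Ideal.span {(X x - X y : MvPolynomial V' K)}) =
      edgeIdeal K G' := by
  classical
  apply le_antisymm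
  · intro f hf
    rw [Ideal.mem_colon_span_singleton] at hf
    have hnadj : ¬ G'.Adj x y := fun hadj => by
      have := h.2.1 x y hadj
      rw [hα] at this
      exact G.irrefl this
    have hcomm := hcond1 x y hxy hα
    have hcomm' := hcond1 y x hxy.symm hα.symm
    set g : MvPolynomial V' K := AddMonoidAlgebra.ofCoeff (Finsupp.filter (fun d => ¬ EdgeDvd G' d) (AddMonoidAlgebra.coeff f)) with hgdef
    set fI : MvPolynomial V' K := AddMonoidAlgebra.ofCoeff (Finsupp.filter (fun d => EdgeDvd G' d) (AddMonoidAlgebra.coeff f)) with hfIdef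
    have hsplit : fI + g = f := congrArg AddMonoidAlgebra.ofCoeff (Finsupp.filter_pos_add_filter_neg (AddMonoidAlgebra.coeff f) _)
    have hfImem : fI ∈ edgeIdeal K G' := by
      rw [mem_edgeIdeal_iff]
      intro d hd
      by_contra hD
      have h0 : coeff d fI = 0 := Finsupp.filter_apply_neg _ (AddMonoidAlgebra.coeff f) hD
      exact mem_support_iff.1 hd h0
    have hgD : ∀ d ∈ g.support, ¬ EdgeDvd G' d := by
      intro d hd hD
      have h0 : coeff d g = 0 := Finsupp.filter_apply_neg (fun d => ¬ EdgeDvd G' d) (AddMonoidAlgebra.coeff f) (by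
        simpa using hD)
      exact mem_support_iff.1 hd h0
    have hgeq : g = f - fI := by
      rw [← hsplit]; ring
    have hgmul : g * (X x - X y) ∈ edgeIdeal K G' := by
      rw [hgeq, sub_mul]
      exact Ideal.sub_mem _ hf (Ideal.mul_mem_right _ _ hfImem)
    have hmuld : ∀ d ∈ (g * (X x - X y)).support, EdgeDvd G' d :=
      (mem_edgeIdeal_iff G').1 hgmul
    by_cases hg0 : g = 0
    · rw [hg0, add_zero] at hsplit
      rwa [← hsplit]
    · exfalso
      by_cases hc : ∃ d ∈ g.support, ¬ ∃ z, G'.Adj x z ∧ d z ≠ 0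
      · exact key_lemma G' x y hxy hnadj hcomm g hgD hmuld hc
      · push_neg at hc
        have hmuld' : ∀ d ∈ (g * (X y - X x)).support, EdgeDvd G' d := by
          intro d hd
          apply hmuld
          have : g * (X y - X x) = -(g * (X x - X y)) := by ring
          rwa [this, support_neg] at hd
        apply key_lemma G' y x hxy.symm (fun hadj => hnadj hadj.symm) hcomm' g hgD hmuld'
        obtain ⟨d0, hd0⟩ := (Finset.nonempty_iff_ne_empty (s := g.support)).2 (by rwa [Ne, support_eq_empty])
        refine ⟨d0, hd0, ?_⟩
        rintro ⟨w, hw, hw0⟩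
        obtain ⟨z, hz, hz0⟩ := hc d0 hd0
        exact hgD d0 hd0 (edgeDvd_of_pair G' (hcomm z w hz hw) hz0 hw0)
  · intro f hf
    rw [Ideal.mem_colon_span_singleton]
    exact Ideal.mul_mem_right _ _ hf
end

section
/- If G is a connected graph with n edges, then for every integer 1 ≤ j ≤ n there exists a splitting graph G' of G with exactly j connected components. -/
open SimpleGraph

lemma exists_connected_subgraph_card_edges
    {V : Type} [Fintype V] [DecidableEq V] (G : SimpleGraph V) [DecidableRel G.Adj]
    (hconn : G.Connected) (k : ℕ) (hk1 : 1 ≤ k) (hkn : k ≤ G.edgeFinset.card) :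
    ∃ (H : G.Subgraph) (F : Finset (Sym2 V)),
      H.Connected ∧ H.edgeSet = ↑F ∧ F.card = k := by
  induction k, hk1 using Nat.le_induction with
  | base =>
    obtain ⟨e, he⟩ := Finset.card_pos.mp hkn
    rw [mem_edgeFinset] at he
    induction e with
    | _ a b =>
      exact ⟨G.subgraphOfAdj he, {s(a, b)}, Subgraph.subgraphOfAdj_connected he,
        by simp [G.edgeSet_subgraphOfAdj he], by simp⟩
  | succ k hk1 ih =>
    obtain ⟨H, F, hHc, hHe, hFc⟩ := ih (le_trans (Nat.le_succ k) hkn)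
    have hF_sub : F ⊆ G.edgeFinset := by
      intro e he
      rw [mem_edgeFinset]
      have : e ∈ H.edgeSet := by rw [hHe]; exact_mod_cast he
      exact H.edgeSet_subset this
    have key : ∃ (a b : V) (h : G.Adj a b), s(a, b) ∉ F ∧ a ∈ H.verts := by
      have hne : (G.edgeFinset \ F).Nonempty := by
        rw [← Finset.card_pos, Finset.card_sdiff_of_subset hF_sub]
        omega
      obtain ⟨e₀, he₀⟩ := hne
      rw [Finset.mem_sdiff, mem_edgeFinset] at he₀
      induction e₀ with
      | _ a b =>
        by_cases ha : a ∈ H.verts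
        · exact ⟨a, b, he₀.1, he₀.2, ha⟩
        · obtain ⟨v₀, hv₀⟩ := hHc.nonempty
          obtain ⟨p⟩ := hconn.preconnected v₀ a
          obtain ⟨d, _, hd1, hd2⟩ := p.exists_boundary_dart H.verts hv₀ ha
          refine ⟨d.fst, d.snd, d.adj, fun hmem => hd2 ?_, hd1⟩
          have : s(d.fst, d.snd) ∈ H.edgeSet := by rw [hHe]; exact_mod_cast hmem
          exact (Subgraph.mem_edgeSet.mp this).snd_mem
    obtain ⟨a, b, hab, habF, haH⟩ := key
    refine ⟨H ⊔ G.subgraphOfAdj hab, insert s(a, b) F,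
      Subgraph.connected_sup hHc.preconnected (Subgraph.subgraphOfAdj_connected hab).preconnected ⟨a, haH, by simp⟩, ?_, ?_⟩
    · rw [Subgraph.edgeSet_sup, hHe, G.edgeSet_subgraphOfAdj hab]
      rw [Finset.coe_insert, Set.insert_eq, Set.union_comm]
    · rw [Finset.card_insert_of_notMem habF, hFc]

namespace SplittingAux

lemma out_spec {V : Type*} (e : Sym2 V) : s(e.out.1, e.out.2) = e := by
  exact Quot.out_eq e

lemma adj_out {V : Type*} (G : SimpleGraph V) {e : Sym2 V} (he : e ∈ G.edgeSet) :
    G.Adj e.out.1 e.out.2 := by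
  rw [← SimpleGraph.mem_edgeSet, out_spec]
  exact he

lemma fin2_cases {i i' : Fin 2} (h : i ≠ i') : (i = 0 ∧ i' = 1) ∨ (i = 1 ∧ i' = 0) := by
  revert h
  revert i i'
  decide

variable {V : Type} {G : SimpleGraph V} (H : G.Subgraph) (R : Finset (Sym2 V))

/-- The splitting graph: a copy of `H` plus a separate edge for each element of `R`. -/
def SG : SimpleGraph (↥H.verts ⊕ ({e : Sym2 V // e ∈ R} × Fin 2)) where
  Adj x y := match x, y with
    | .inl v, .inl w => H.coe.Adj v w
    | .inr p, .inr q => p.1 = q.1 ∧ p.2 ≠ q.2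
    | _, _ => False
  symm := by
    constructor
    rintro (v | p) (w | q) h
    · exact H.coe.symm.symm _ _ h
    · exact h.elim
    · exact h.elim
    · exact ⟨h.1.symm, h.2.symm⟩
  loopless := by
    constructor
    rintro (v | p) h
    · exact H.coe.loopless.irrefl v h
    · exact h.2 rfl

/-- The splitting map. -/
noncomputable def am : (↥H.verts ⊕ ({e : Sym2 V // e ∈ R} × Fin 2)) → V
  | .inl v => ↑v
  | .inr p => if p.2 = 0 then (↑p.1 : Sym2 V).out.1 else (↑p.1 : Sym2 V).out.2

lemma am_inr0 (e : {e : Sym2 V // e ∈ R}) : am H R (Sum.inr (e, 0)) = (↑e : Sym2 V).out.1 := by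
  simp [am]

lemma am_inr1 (e : {e : Sym2 V // e ∈ R}) : am H R (Sum.inr (e, 1)) = (↑e : Sym2 V).out.2 := by
  simp [am]

lemma am_pair (p q : {e : Sym2 V // e ∈ R} × Fin 2) (h1 : p.1 = q.1) (h2 : p.2 ≠ q.2) :
    s(am H R (Sum.inr p), am H R (Sum.inr q)) = ↑p.1 := by
  obtain ⟨e, i⟩ := p
  obtain ⟨e', i'⟩ := q
  simp only at h1 h2
  subst h1
  rcases fin2_cases h2 with ⟨rfl, rfl⟩ | ⟨rfl, rfl⟩
  · rw [am_inr0, am_inr1]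
    exact out_spec _
  · rw [am_inr0, am_inr1, Sym2.eq_swap]
    exact out_spec _

lemma map_inr_edge (p q : {e : Sym2 V // e ∈ R} × Fin 2) (h1 : p.1 = q.1) (h2 : p.2 ≠ q.2) :
    Sym2.map (am H R) s(Sum.inr p, Sum.inr q) = ↑p.1 := by
  rw [Sym2.map_pair_eq, am_pair H R p q h1 h2]

lemma card_components (hHc : H.Connected) :
    Nat.card (SG H R).ConnectedComponent = R.card + 1 := by
  classical
  obtain ⟨v₀, hv₀⟩ := hHc.nonempty
  set φ : (↥H.verts ⊕ ({e : Sym2 V // e ∈ R} × Fin 2)) → Option {e : Sym2 V // e ∈ R} :=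
    Sum.elim (fun _ => none) (fun p => some p.1) with hφdef
  have hφ : ∀ x y, (SG H R).Adj x y → φ x = φ y := by
    rintro (v | p) (w | q) h
    · rfl
    · exact h.elim
    · exact h.elim
    · simp [hφdef, h.1]
  have hcoe : H.coe.Connected := hHc
  have hreach : ∀ v : ↥H.verts,
      (SG H R).Reachable (Sum.inl ⟨v₀, hv₀⟩) (Sum.inl v) := by
    intro v
    exact Reachable.map (⟨Sum.inl, fun h => h⟩ : H.coe →g SG H R)
      (hcoe.preconnected ⟨v₀, hv₀⟩ v)
  let ψ : (SG H R).ConnectedComponent → Option {e : Sym2 V // e ∈ R} :=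
    ConnectedComponent.lift φ (fun v w p hp => by
      clear hp
      induction p with
      | nil => rfl
      | cons h _ ih => exact (hφ _ _ h).trans ih)
  let χ : Option {e : Sym2 V // e ∈ R} → (SG H R).ConnectedComponent := fun o =>
    match o with
    | none => (SG H R).connectedComponentMk (Sum.inl ⟨v₀, hv₀⟩)
    | some e => (SG H R).connectedComponentMk (Sum.inr (e, 0))
  have hequiv : (SG H R).ConnectedComponent ≃ Option {e : Sym2 V // e ∈ R} := by
    refine ⟨ψ, χ, ?_, ?_⟩
    · intro c
      induction c using ConnectedComponent.ind with
      | _ x =>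
        rcases x with v | p
        · exact ConnectedComponent.sound (hreach v)
        · show (SG H R).connectedComponentMk (Sum.inr (p.1, 0)) = _
          by_cases hp : p.2 = 0
          · rw [show p = (p.1, 0) from Prod.ext rfl hp]
          · exact ConnectedComponent.sound
              (Adj.reachable (⟨rfl, fun h => hp h.symm⟩ :
                (SG H R).Adj (Sum.inr (p.1, 0)) (Sum.inr p)))
    · rintro (_ | e) <;> rfl
  rw [Nat.card_congr hequiv, Nat.card_eq_fintype_card, Fintype.card_option, Fintype.card_coe]

end SplittingAux

set_option maxHeartbeats 1000000 in
/-- If `G` is a connected graph with `n` edges, then for every `1 ≤ j ≤ n` there is a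
splitting graph `G'` of `G` with exactly `j` connected components. -/
theorem exists_splitting_with_j_components
    {V : Type} [Fintype V] [DecidableEq V] (G : SimpleGraph V) [DecidableRel G.Adj]
    (hconn : G.Connected) (j : ℕ) (hj1 : 1 ≤ j) (hjn : j ≤ G.edgeFinset.card) :
    ∃ (m : ℕ) (G' : SimpleGraph (Fin m)) (α : Fin m → V),
      IsSplittingMap G' G α ∧ Nat.card G'.ConnectedComponent = j := by
  classical
  open SplittingAux in
  obtain ⟨H, F, hHc, hHe, hFc⟩ := exists_connected_subgraph_card_edges G hconn
    (G.edgeFinset.card + 1 - j) (by omega) (by omega)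
  have hF_sub : F ⊆ G.edgeFinset := by
    intro e he
    rw [mem_edgeFinset]
    have : e ∈ H.edgeSet := by rw [hHe]; exact_mod_cast he
    exact H.edgeSet_subset this
  set R : Finset (Sym2 V) := G.edgeFinset \ F with hR
  have hRcard : R.card = j - 1 := by
    rw [hR, Finset.card_sdiff_of_subset hF_sub, hFc]
    omega
  have hRmem : ∀ e : {e : Sym2 V // e ∈ R}, (↑e : Sym2 V) ∈ G.edgeSet ∧ (↑e : Sym2 V) ∉ F := by
    intro e
    have h := Finset.mem_sdiff.mp e.2
    exact ⟨mem_edgeFinset.mp h.1, h.2⟩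
  have hsplit : IsSplittingMap (SG H R) G (am H R) := by
    refine ⟨?_, ?_, ?_, ?_, ?_⟩
    · -- surjectivity
      intro v
      by_cases hv : v ∈ H.verts
      · exact ⟨Sum.inl ⟨v, hv⟩, rfl⟩
      · obtain ⟨v₀, hv₀⟩ := hHc.nonempty
        have hvne : v ≠ v₀ := fun h => hv (h ▸ hv₀)
        obtain ⟨p⟩ := hconn.preconnected v v₀
        obtain ⟨w, hadj⟩ : ∃ w, G.Adj v w := by
          cases p with
          | nil => exact absurd rfl hvne
          | cons h q => exact ⟨_, h⟩
        have heG : s(v, w) ∈ G.edgeFinset := mem_edgeFinset.mpr hadj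
        have heF : s(v, w) ∉ F := by
          intro hF
          apply hv
          have : s(v, w) ∈ H.edgeSet := by rw [hHe]; exact_mod_cast hF
          exact (Subgraph.mem_edgeSet.mp this).fst_mem
        have heR : s(v, w) ∈ R := Finset.mem_sdiff.mpr ⟨heG, heF⟩
        have hve : v ∈ s(v, w) := Sym2.mem_mk_left v w
        rw [← out_spec s(v, w), Sym2.mem_iff] at hve
        rcases hve with h1 | h2
        · refine ⟨Sum.inr (⟨s(v, w), heR⟩, 0), ?_⟩
          rw [am_inr0]
          exact h1.symm
        · refine ⟨Sum.inr (⟨s(v, w), heR⟩, 1), ?_⟩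
          rw [am_inr1]
          exact h2.symm
    · -- adjacency
      rintro (v | p) (w | q) h
      · exact H.adj_sub h
      · exact h.elim
      · exact h.elim
      · obtain ⟨h1, h2⟩ := h
        have heG : G.Adj (↑p.1 : Sym2 V).out.1 (↑p.1 : Sym2 V).out.2 :=
          adj_out G (hRmem p.1).1
        obtain ⟨e, i⟩ := p
        obtain ⟨e', i'⟩ := q
        simp only at h1 h2
        subst h1
        rcases fin2_cases h2 with ⟨rfl, rfl⟩ | ⟨rfl, rfl⟩
        · rw [am_inr0, am_inr1]
          exact heG
        · rw [am_inr1, am_inr0]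
          exact heG.symm
    · -- MapsTo
      intro x hx
      induction x with
      | _ a b =>
        rw [mem_edgeSet] at hx
        rcases a with v | p <;> rcases b with w | q
        · rw [Sym2.map_pair_eq]
          exact H.adj_sub hx
        · exact hx.elim
        · exact hx.elim
        · rw [map_inr_edge H R p q hx.1 hx.2]
          exact (hRmem p.1).1
    · -- InjOn
      intro x hx y hy hxy
      induction x with
      | _ a b =>
        induction y with
        | _ c d =>
          rw [mem_edgeSet] at hx hy
          rcases a with v | p <;> rcases b with w | q <;> try exact hx.elim
          all_goals rcases c with v' | p' <;> rcases d with w' | q' <;> try exact hy.elim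
          · -- both from H
            rw [Sym2.map_pair_eq, Sym2.map_pair_eq] at hxy
            rcases Sym2.eq_iff.mp hxy with ⟨h1, h2⟩ | ⟨h1, h2⟩
            · rw [Subtype.ext h1, Subtype.ext h2]
            · rw [Subtype.ext h1, Subtype.ext h2, Sym2.eq_swap]
          · -- H edge vs R edge : impossible
            exfalso
            rw [map_inr_edge H R p' q' hy.1 hy.2, Sym2.map_pair_eq] at hxy
            have hmemF : (↑p'.1 : Sym2 V) ∈ H.edgeSet := by
              rw [← hxy]
              exact Subgraph.mem_edgeSet.mpr hx
            rw [hHe] at hmemF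
            exact (hRmem p'.1).2 (by exact_mod_cast hmemF)
          · -- R edge vs H edge : impossible
            exfalso
            rw [map_inr_edge H R p q hx.1 hx.2, Sym2.map_pair_eq] at hxy
            have hmemF : (↑p.1 : Sym2 V) ∈ H.edgeSet := by
              rw [hxy]
              exact Subgraph.mem_edgeSet.mpr hy
            rw [hHe] at hmemF
            exact (hRmem p.1).2 (by exact_mod_cast hmemF)
          · -- both R edges
            rw [map_inr_edge H R p q hx.1 hx.2, map_inr_edge H R p' q' hy.1 hy.2] at hxy
            obtain ⟨e, i⟩ := p
            obtain ⟨e', i'⟩ := q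
            obtain ⟨f, k⟩ := p'
            obtain ⟨f', k'⟩ := q'
            obtain ⟨h1, h2⟩ := hx
            obtain ⟨h3, h4⟩ := hy
            simp only at h1 h2 h3 h4 hxy
            subst h1; subst h3
            have hef : e = f := Subtype.ext hxy
            subst hef
            rcases fin2_cases h2 with ⟨rfl, rfl⟩ | ⟨rfl, rfl⟩ <;>
              rcases fin2_cases h4 with ⟨rfl, rfl⟩ | ⟨rfl, rfl⟩
            · rfl
            · exact Sym2.eq_swap
            · exact Sym2.eq_swap
            · rfl
    · -- SurjOn
      intro e he
      by_cases heF : e ∈ F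
      · have hmem : e ∈ H.edgeSet := by rw [hHe]; exact_mod_cast heF
        induction e with
        | _ a b =>
          have hadj : H.Adj a b := Subgraph.mem_edgeSet.mp hmem
          refine ⟨s(Sum.inl ⟨a, hadj.fst_mem⟩, Sum.inl ⟨b, hadj.snd_mem⟩),
            ((SG H R).mem_edgeSet).mpr ?_, ?_⟩
          · exact hadj
          · rw [Sym2.map_pair_eq]
            rfl
      · have heR : e ∈ R := Finset.mem_sdiff.mpr ⟨mem_edgeFinset.mpr he, heF⟩
        refine ⟨s(Sum.inr (⟨e, heR⟩, 0), Sum.inr (⟨e, heR⟩, 1)),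
          ((SG H R).mem_edgeSet).mpr ?_, ?_⟩
        · refine ⟨rfl, ?_⟩
          show (0 : Fin 2) ≠ 1
          decide
        exact map_inr_edge H R (⟨e, heR⟩, 0) (⟨e, heR⟩, 1) rfl
          (show (0 : Fin 2) ≠ 1 by decide)
  -- transport to `Fin m`
  obtain ⟨m, ⟨ε⟩⟩ := Finite.exists_equiv_fin (↥H.verts ⊕ ({e : Sym2 V // e ∈ R} × Fin 2))
  refine ⟨m, (SG H R).comap ε.symm, am H R ∘ ε.symm, ⟨?_, ?_, ?_⟩, ?_⟩
  · exact hsplit.1.comp ε.symm.surjective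
  · exact fun v w h => hsplit.2.1 _ _ h
  · have hmem : ∀ x : Sym2 (Fin m),
        x ∈ ((SG H R).comap ε.symm).edgeSet ↔ Sym2.map ε.symm x ∈ (SG H R).edgeSet := by
      intro x
      induction x with
      | _ a b => rw [Sym2.map_pair_eq]; rfl
    have hbij : Set.BijOn (Sym2.map ⇑ε.symm) ((SG H R).comap ε.symm).edgeSet
        (SG H R).edgeSet := by
      refine ⟨fun x hx => (hmem x).mp hx, (Sym2.map.injective ε.symm.injective).injOn, ?_⟩
      intro y hy
      refine ⟨Sym2.map ⇑ε y, ?_, ?_⟩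
      · rw [hmem, Sym2.map_map, Equiv.symm_comp_self, Sym2.map_id, id]
        exact hy
      · rw [Sym2.map_map, Equiv.symm_comp_self, Sym2.map_id, id]
    have hcomp := hsplit.2.2.comp hbij
    have heq : (Sym2.map (am H R)) ∘ (Sym2.map ⇑ε.symm) = Sym2.map (am H R ∘ ⇑ε.symm) := by
      funext x
      exact Sym2.map_map x
    rwa [heq] at hcomp
  · have hiso : (SG H R).comap ⇑ε.symm ≃g SG H R := ⟨ε.symm, Iff.rfl⟩
    rw [Nat.card_congr hiso.connectedComponentEquiv, card_components H R hHc, hRcard]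
    omega
end
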